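/- In the four-state protocol of Algorithm 2, let a configuration C be reachable from the all-r^ω initial configuration on n agents. If n is odd and #token = 1 in C, then #red − #blue = 1 in C. -/
import Mathlib


/-- States of the four-state protocol: r^ω, b^ω, r, b. -/
inductive St : Type
  | rw | bw | r | b
deriving DecidableEq

/-- Deterministic transition function of the protocol. -/
def delta : St → St → St × St
  | .rw, .rw => (.r, .b)
  | .rw, .bw => (.b, .b)
  | .bw, .rw => (.b, .b)
  | .rw, .r  => (.r, .rw)
  | .r,  .rw => (.rw, .r)
  | .bw, .b  => (.b, .bw)
  | .b,  .bw => (.bw, .b)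
  | .rw, .b  => (.r, .bw)
  | .b,  .rw => (.bw, .r)
  | .bw, .r  => (.b, .rw)
  | .r,  .bw => (.rw, .b)
  | p, q     => (p, q)

/-- One step: apply the rule to an ordered pair of distinct agents. -/
def Step {n : ℕ} (C C' : Fin n → St) : Prop :=
  ∃ i j : Fin n, i ≠ j ∧
    C' = Function.update (Function.update C i (delta (C i) (C j)).1) j
          (delta (C i) (C j)).2

/-- Number of agents in state `s`. -/
def cnt {n : ℕ} (C : Fin n → St) (s : St) : ℕ :=
  (Finset.univ.filter fun a => C a = s).card

/-- Number of token-holding agents (state r^ω or b^ω). -/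
def tokens {n : ℕ} (C : Fin n → St) : ℕ := cnt C .rw + cnt C .bw

/-- Number of red agents (state r^ω or r). -/
def reds {n : ℕ} (C : Fin n → St) : ℕ := cnt C .rw + cnt C .r

/-- Number of blue agents (state b^ω or b). -/
def blues {n : ℕ} (C : Fin n → St) : ℕ := cnt C .bw + cnt C .b

/-- Color of a state: `true` = red, `false` = blue. -/
def isRed : St → Bool
  | .rw => true
  | .r  => true
  | .bw => false
  | .b  => false

/-- Integer weight: #r − #b − 2·#bʷ, pointwise. -/
def w : St → ℤ
  | .rw => 0
  | .bw => -2
  | .r  => 1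
  | .b  => -1

/-- Token indicator. -/
def t : St → ℤ
  | .rw => 1
  | .bw => 1
  | .r  => 0
  | .b  => 0

lemma delta_w (p q : St) : w (delta p q).1 + w (delta p q).2 = w p + w q := by
  cases p <;> cases q <;> decide

lemma step_w {n : ℕ} {C C' : Fin n → St} (h : Step C C') :
    ∑ x, w (C' x) = ∑ x, w (C x) := by
  obtain ⟨i, j, hij, hC'⟩ := h
  have hdiff : ∑ x, (w (C' x) - w (C x)) = ∑ x ∈ ({i, j} : Finset (Fin n)),
      (w (C' x) - w (C x)) := by
    refine (Finset.sum_subset (Finset.subset_univ _) ?_).symm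
    intro x _ hx
    simp only [Finset.mem_insert, Finset.mem_singleton, not_or] at hx
    have : C' x = C x := by
      simp [hC', Function.update_of_ne hx.2, Function.update_of_ne hx.1]
    simp [this]
  have hCi : C' i = (delta (C i) (C j)).1 := by
    simp [hC', Function.update_of_ne hij]
  have hCj : C' j = (delta (C i) (C j)).2 := by
    simp [hC']
  have hpair : ∑ x ∈ ({i, j} : Finset (Fin n)), (w (C' x) - w (C x)) = 0 := by
    rw [Finset.sum_pair hij, hCi, hCj]
    have := delta_w (C i) (C j)
    linarith
  have : ∑ x, (w (C' x) - w (C x)) = 0 := by rw [hdiff, hpair]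
  rw [Finset.sum_sub_distrib] at this
  linarith

lemma reach_w {n : ℕ} {C : Fin n → St}
    (hreach : Relation.ReflTransGen Step (fun _ => St.rw) C) :
    ∑ x, w (C x) = 0 := by
  induction hreach with
  | refl => simp [w]
  | tail _ hstep ih => rw [step_w hstep, ih]

lemma cnt_cast {n : ℕ} (C : Fin n → St) (s : St) :
    (cnt C s : ℤ) = ∑ x, if C x = s then (1 : ℤ) else 0 := by
  rw [cnt, Finset.card_filter]
  push_cast
  rfl

theorem stmt4 (n : ℕ) (C : Fin n → St)
    (hreach : Relation.ReflTransGen Step (fun _ => St.rw) C)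
    (hodd : Odd n) (htok : tokens C = 1) :
    reds C = blues C + 1 := by
  have hw := reach_w hreach
  have hsum : (reds C : ℤ) - blues C = (tokens C : ℤ) + ∑ x, w (C x) := by
    simp only [reds, blues, tokens]
    push_cast
    rw [cnt_cast, cnt_cast, cnt_cast, cnt_cast]
    rw [show ((∑ x, if C x = St.rw then (1:ℤ) else 0) + ∑ x, if C x = St.r then (1:ℤ) else 0)
        - ((∑ x, if C x = St.bw then (1:ℤ) else 0) + ∑ x, if C x = St.b then (1:ℤ) else 0)
        = ∑ x, (((if C x = St.rw then (1:ℤ) else 0) + (if C x = St.r then (1:ℤ) else 0))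
          - ((if C x = St.bw then (1:ℤ) else 0) + (if C x = St.b then (1:ℤ) else 0))) by
      rw [Finset.sum_sub_distrib, Finset.sum_add_distrib, Finset.sum_add_distrib]]
    rw [← Finset.sum_add_distrib, ← Finset.sum_add_distrib]
    apply Finset.sum_congr rfl
    intro x _
    cases h : C x <;> simp [w, t, h]
  rw [hw, add_zero, htok] at hsum
  omega
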